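/- Let g: ℝ → ℝ be 2π-periodic and α-Hölder continuous with seminorm [g]_{0,α}, for some α ∈ (0,1). Define for r > 1 and φ ∈ ℝ: ω(re^{iφ}) = ∫_{-π}^{π} g(τ+φ) · r sin τ / (r² + 1 - 2r cos τ) dτ. Then there is a constant C depending only on α such that ‖ω‖_∞ ≤ C [g]_{0,α} on the annulus 1 < |x| ≤ 2. -/

import Mathlib

open Real

set_option maxHeartbeats 1000000 in
theorem conjugate_poisson_sup_bound (α : ℝ) (hα : α ∈ Set.Ioo (0 : ℝ) 1) :
    ∃ C > 0, ∀ (g : ℝ → ℝ) (Cg : ℝ),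
      (∀ x, g (x + 2 * π) = g x) →
      (∀ x y, |g x - g y| ≤ Cg * |x - y| ^ α) →
      ∀ r φ : ℝ, 1 < r → r ≤ 2 →
        |∫ τ in (-π)..π,
            g (τ + φ) * (r * Real.sin τ / (r ^ 2 + 1 - 2 * r * Real.cos τ))|
          ≤ C * Cg := by
  obtain ⟨hα0, hα1⟩ := hα
  have hπ : (0 : ℝ) < π := Real.pi_pos
  -- integrability of τ ↦ |τ| ^ (α - 1)
  have h1 : IntervalIntegrable (fun τ : ℝ => |τ| ^ (α - 1)) MeasureTheory.volume 0 π := by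
    refine (intervalIntegral.intervalIntegrable_rpow' (r := α - 1) (by linarith)).congr_ae ?_
    filter_upwards [MeasureTheory.ae_restrict_mem measurableSet_uIoc] with x hx
    rw [Set.uIoc_of_le hπ.le] at hx
    rw [abs_of_pos hx.1]
  have h2 : IntervalIntegrable (fun τ : ℝ => |τ| ^ (α - 1)) MeasureTheory.volume (-π) 0 := by
    have := (IntervalIntegrable.iff_comp_neg (f := fun τ : ℝ => |τ| ^ (α - 1))).mp h1
    simp only [abs_neg, neg_zero] at this
    exact this.symm
  have hB : IntervalIntegrable (fun τ : ℝ => |τ| ^ (α - 1)) MeasureTheory.volume (-π) π :=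
    h2.trans h1
  set I : ℝ := ∫ τ in (-π)..π, |τ| ^ (α - 1) with hIdef
  have hI0 : 0 ≤ I :=
    intervalIntegral.integral_nonneg (by linarith) fun x _ =>
      Real.rpow_nonneg (abs_nonneg x) _
  refine ⟨π ^ 2 / 4 * I + 1, by nlinarith [mul_nonneg (by positivity : (0:ℝ) ≤ π ^ 2 / 4) hI0], ?_⟩
  intro g Cg hper hHol r φ hr1 hr2
  have hCg : 0 ≤ Cg := by
    have h := hHol 1 0
    simp only [sub_zero, abs_one, Real.one_rpow, mul_one] at h
    exact le_trans (abs_nonneg _) h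
  have hr0 : (0 : ℝ) < r := by linarith
  -- denominator positivity
  have hD : ∀ τ : ℝ, 0 < r ^ 2 + 1 - 2 * r * Real.cos τ := by
    intro τ
    nlinarith [Real.cos_le_one τ, Real.neg_one_le_cos τ, sq_nonneg (r - 1)]
  set K : ℝ → ℝ := fun τ => r * Real.sin τ / (r ^ 2 + 1 - 2 * r * Real.cos τ) with hKdef
  have hKcont : Continuous K := by
    apply (continuous_const.mul Real.continuous_sin).div
    · continuity
    · exact fun τ => (hD τ).ne'
  -- continuity of g
  have hg : Continuous g := by
    rw [continuous_iff_continuousAt]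
    intro x₀
    rw [ContinuousAt, tendsto_iff_dist_tendsto_zero]
    have habs : Filter.Tendsto (fun x : ℝ => |x - x₀|) (nhds x₀) (nhds 0) := by
      have hc : Continuous fun x : ℝ => |x - x₀| :=
        (continuous_id.sub continuous_const).abs
      simpa using hc.tendsto x₀
    have hc : ContinuousAt (fun y : ℝ => y ^ α) (0 : ℝ) :=
      Real.continuousAt_rpow_const 0 α (Or.inr hα0.le)
    have h2 := (hc.tendsto.comp habs).const_mul Cg
    rw [Real.zero_rpow hα0.ne', mul_zero] at h2
    refine squeeze_zero (fun x => dist_nonneg) (fun x => ?_) h2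
    rw [Real.dist_eq]
    exact hHol x x₀
  -- basic integrability facts
  have hgK : IntervalIntegrable (fun τ => g (τ + φ) * K τ) MeasureTheory.volume (-π) π :=
    (((hg.comp (continuous_id.add continuous_const)).mul hKcont)).intervalIntegrable _ _
  have hKint : IntervalIntegrable K MeasureTheory.volume (-π) π :=
    hKcont.intervalIntegrable _ _
  have hdiffK : IntervalIntegrable (fun τ => (g (τ + φ) - g φ) * K τ)
      MeasureTheory.volume (-π) π :=
    ((((hg.comp (continuous_id.add continuous_const)).sub continuous_const).mul
      hKcont)).intervalIntegrable _ _
  -- K is odd, so its integral over [-π, π] vanishes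
  have hKodd : ∀ τ : ℝ, K (-τ) = -K τ := by
    intro τ
    simp [hKdef, Real.sin_neg, Real.cos_neg, neg_div]
  have hK0 : (∫ τ in (-π)..π, K τ) = 0 := by
    have h := intervalIntegral.integral_comp_neg (a := -π) (b := π) (f := K)
    simp only [hKodd, neg_neg, intervalIntegral.integral_neg] at h
    linarith
  -- replace g (τ + φ) by g (τ + φ) - g φ
  have key : (∫ τ in (-π)..π, g (τ + φ) * K τ)
      = ∫ τ in (-π)..π, (g (τ + φ) - g φ) * K τ := by
    have e : ∀ τ ∈ Set.uIcc (-π) π,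
        g (τ + φ) * K τ = (g (τ + φ) - g φ) * K τ + g φ * K τ := fun τ _ => by ring
    rw [intervalIntegral.integral_congr e,
      intervalIntegral.integral_add hdiffK (hKint.const_mul (g φ)),
      intervalIntegral.integral_const_mul, hK0, mul_zero, add_zero]
  -- pointwise bound
  have hbound : ∀ τ ∈ Set.uIoc (-π) π,
      |(g (τ + φ) - g φ) * K τ| ≤ Cg * (π ^ 2 / 4) * |τ| ^ (α - 1) := by
    intro τ hτmem
    rw [Set.uIoc_of_le (by linarith : -π ≤ π)] at hτmem
    have hτπ : |τ| ≤ π := abs_le.mpr ⟨hτmem.1.le, hτmem.2⟩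
    rcases eq_or_ne τ 0 with rfl | hτ
    · simp [hKdef, Real.zero_rpow (by linarith : α - 1 ≠ 0)]
    · have hτa : 0 < |τ| := abs_pos.mpr hτ
      -- Hölder bound
      have h1 : |g (τ + φ) - g φ| ≤ Cg * |τ| ^ α := by
        have := hHol (τ + φ) φ
        rwa [add_sub_cancel_right] at this
      -- kernel bound
      have h2 : |K τ| ≤ π ^ 2 / (4 * |τ|) := by
        -- Jordan-type inequality: 2 τ² ≤ π² (1 - cos τ)
        have hjs : 2 / π * |τ / 2| ≤ |Real.sin (τ / 2)| :=
          Real.mul_abs_le_abs_sin (by rw [abs_div, abs_two]; linarith)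
        have hjs' : |τ| ≤ π * |Real.sin (τ / 2)| := by
          rw [abs_div, abs_two] at hjs
          have e : 2 / π * (|τ| / 2) = |τ| / π := by
            field_simp
          rw [e, div_le_iff₀ hπ] at hjs
          linarith
        have hsq : Real.sin (τ / 2) ^ 2 = 1 / 2 - Real.cos τ / 2 := by
          have := Real.sin_sq_eq_half_sub (τ / 2)
          rwa [mul_div_cancel₀ _ (two_ne_zero)] at this
        have hcos2 : 2 * τ ^ 2 ≤ π ^ 2 * (1 - Real.cos τ) := by
          nlinarith [hjs', hsq, sq_abs τ, sq_abs (Real.sin (τ / 2)),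
            abs_nonneg τ, abs_nonneg (Real.sin (τ / 2))]
        have hDge : 4 * r * τ ^ 2 ≤ π ^ 2 * (r ^ 2 + 1 - 2 * r * Real.cos τ) := by
          nlinarith [mul_le_mul_of_nonneg_left hcos2 (by linarith : (0:ℝ) ≤ 2 * r),
            mul_nonneg (sq_nonneg π) (sq_nonneg (r - 1))]
        have hsin : |Real.sin τ| ≤ |τ| := Real.abs_sin_le_abs
        rw [hKdef]
        rw [abs_div, abs_mul, abs_of_pos hr0, abs_of_pos (hD τ),
          div_le_div_iff₀ (hD τ) (by positivity)]
        nlinarith [hDge, mul_le_mul_of_nonneg_left hsin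
          (by positivity : (0:ℝ) ≤ 4 * r * |τ|), sq_abs τ]
      rw [abs_mul]
      calc |g (τ + φ) - g φ| * |K τ|
          ≤ (Cg * |τ| ^ α) * (π ^ 2 / (4 * |τ|)) :=
            mul_le_mul h1 h2 (abs_nonneg _)
              (mul_nonneg hCg (Real.rpow_nonneg (abs_nonneg _) _))
        _ = Cg * (π ^ 2 / 4) * |τ| ^ (α - 1) := by
            rw [Real.rpow_sub hτa, Real.rpow_one]
            field_simp
  -- conclude
  have hfinal : |∫ τ in (-π)..π, (g (τ + φ) - g φ) * K τ|
      ≤ |∫ τ in (-π)..π, Cg * (π ^ 2 / 4) * |τ| ^ (α - 1)| := by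
    have hae : ∀ᵐ t ∂MeasureTheory.volume.restrict (Set.uIoc (-π) π),
        ‖(g (t + φ) - g φ) * K t‖ ≤ Cg * (π ^ 2 / 4) * |t| ^ (α - 1) := by
      filter_upwards [MeasureTheory.ae_restrict_mem measurableSet_uIoc] with t ht
      rw [Real.norm_eq_abs]
      exact hbound t ht
    exact intervalIntegral.norm_integral_le_abs_of_norm_le hae
      (hB.const_mul (Cg * (π ^ 2 / 4)))
  have heval : (∫ τ in (-π)..π, Cg * (π ^ 2 / 4) * |τ| ^ (α - 1))
      = Cg * (π ^ 2 / 4) * I := by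
    rw [intervalIntegral.integral_const_mul]
  calc |∫ τ in (-π)..π, g (τ + φ) * K τ|
      = |∫ τ in (-π)..π, (g (τ + φ) - g φ) * K τ| := by rw [key]
    _ ≤ |∫ τ in (-π)..π, Cg * (π ^ 2 / 4) * |τ| ^ (α - 1)| := hfinal
    _ = Cg * (π ^ 2 / 4) * I := by
        rw [heval, abs_of_nonneg (mul_nonneg (mul_nonneg hCg (by positivity)) hI0)]
    _ ≤ (π ^ 2 / 4 * I + 1) * Cg := by nlinarith [hCg]
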